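/- Let {v₀, …, v_k} be linearly independent vectors in a real inner product space. Then the orthogonal projection of v₀ onto the orthogonal complement of span{v₀ − v₁, …, v₀ − v_k} is nonzero, and its inner product with vᵢ equals ‖pr(v₀)‖² > 0 for every 0 ≤ i ≤ k. -/

import Mathlib

open RealInnerProductSpace

/-- If `v₀,…,v_k` are linearly independent, then the orthogonal projection of `v₀` onto the
orthogonal complement of the span of `v₀ − v₁, …, v₀ − v_k` is nonzero, and its inner
product with each `vᵢ` equals `‖pr(v₀)‖² > 0`. -/
theorem projection_inner_eq_normSq
    {V : Type*} [NormedAddCommGroup V] [InnerProductSpace ℝ V] [FiniteDimensional ℝ V]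
    {k : ℕ} (v : Fin (k + 1) → V)
    (hli : LinearIndependent ℝ v) :
    (Submodule.orthogonalProjection
        ((Submodule.span ℝ (Set.range fun i : Fin k => v 0 - v i.succ))ᗮ) (v 0) : V) ≠ 0 ∧
    0 < ‖(Submodule.orthogonalProjection
        ((Submodule.span ℝ (Set.range fun i : Fin k => v 0 - v i.succ))ᗮ) (v 0) : V)‖ ^ 2 ∧
    ∀ i, ⟪(Submodule.orthogonalProjection
        ((Submodule.span ℝ (Set.range fun i : Fin k => v 0 - v i.succ))ᗮ) (v 0) : V), v i⟫ =
      ‖(Submodule.orthogonalProjection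
        ((Submodule.span ℝ (Set.range fun i : Fin k => v 0 - v i.succ))ᗮ) (v 0) : V)‖ ^ 2 := by
  set S : Submodule ℝ V := Submodule.span ℝ (Set.range fun i : Fin k => v 0 - v i.succ) with hS
  set p : V := (Submodule.orthogonalProjection Sᗮ (v 0) : V) with hp
  have hpmem : p ∈ Sᗮ := SetLike.coe_mem _
  have hsub : v 0 - p ∈ Sᗮᗮ := Submodule.sub_starProjection_mem_orthogonal (K := Sᗮ) (v 0)
  -- p ≠ 0
  have hpne : p ≠ 0 := by
    intro h0
    have hv0 : v 0 ∈ S := by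
      have := hsub
      rw [h0, sub_zero, Submodule.orthogonal_orthogonal] at this
      exact this
    rw [hS, Submodule.mem_span_range_iff_exists_fun] at hv0
    obtain ⟨c, hc⟩ := hv0
    rw [Fintype.linearIndependent_iff] at hli
    set d : Fin (k + 1) → ℝ := Fin.cases ((∑ i, c i) - 1) (fun j => -c j) with hd
    have hsum : ∑ i, d i • v i = 0 := by
      rw [Fin.sum_univ_succ]
      simp only [hd, Fin.cases_zero, Fin.cases_succ]
      have : ∑ i : Fin k, c i • (v 0 - v i.succ) = v 0 := hc
      simp only [smul_sub] at this
      rw [Finset.sum_sub_distrib] at this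
      have h2 : ∑ i : Fin k, c i • v 0 = (∑ i, c i) • v 0 := by
        rw [Finset.sum_smul]
      rw [h2] at this
      have : (∑ i, c i) • v 0 - v 0 = ∑ i : Fin k, c i • v i.succ := by
        linear_combination (norm := module) this
      calc ((∑ i, c i) - 1) • v 0 + ∑ i : Fin k, (-c i) • v i.succ
          = ((∑ i, c i) • v 0 - v 0) - ∑ i : Fin k, c i • v i.succ := by
            rw [sub_smul, one_smul]
            simp [neg_smul, Finset.sum_neg_distrib, sub_eq_add_neg]
        _ = 0 := by rw [this]; simp
    have h0d := hli d hsum 0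
    simp only [hd, Fin.cases_zero] at h0d
    have hci : ∀ j : Fin k, c j = 0 := by
      intro j
      have := hli d hsum j.succ
      simp only [hd, Fin.cases_succ, neg_eq_zero] at this
      exact this
    rw [Finset.sum_congr rfl (fun j _ => hci j)] at h0d
    simp at h0d
  have hpos : 0 < ‖p‖ ^ 2 := by
    have : 0 < ‖p‖ := norm_pos_iff.mpr hpne
    positivity
  refine ⟨hpne, hpos, fun i => ?_⟩
  have hinner0 : ⟪p, v 0⟫ = ‖p‖ ^ 2 := by
    have : ⟪p, v 0 - p⟫ = 0 := hsub p hpmem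
    have h := inner_sub_right (𝕜 := ℝ) p (v 0) p
    rw [this] at h
    rw [real_inner_self_eq_norm_sq] at h
    linarith [h]
  rcases Fin.eq_zero_or_eq_succ i with hi | ⟨j, hj⟩
  · rw [hi]; exact hinner0
  · rw [hj]
    have hdmem : v 0 - v j.succ ∈ S := by
      rw [hS]
      exact Submodule.subset_span ⟨j, rfl⟩
    have : ⟪p, v 0 - v j.succ⟫ = 0 := by
      rw [real_inner_comm]
      exact hpmem _ hdmem
    rw [inner_sub_right] at this
    rw [← hinner0]
    linarith [this]
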